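/- Let n, C be positive integers, let D ≥ 0 be an integer, and let T be a set of exactly 2C squares of the n×n board such that every square (x,y) ∈ T satisfies min(x−1, y−1, n−x, n−y) ≥ D, and such that every diagonal contains at most 2 squares of T. Then the sum of the lengths of the diagonals containing at least one square of T is at least C·n + 2·C·D plus half the sum of the lengths of the diagonals containing exactly one square of T. -/

import Mathlib

/-- The n×n board: squares (x,y) ∈ ℤ×ℤ with 1 ≤ x ≤ n and 1 ≤ y ≤ n. -/
noncomputable def board (n : ℕ) : Finset (ℤ × ℤ) := Finset.Icc 1 (n : ℤ) ×ˢ Finset.Icc 1 (n : ℤ)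

/-- A line of the board: a row (fixed y), a column (fixed x), a positive
diagonal (fixed x − y), or a negative diagonal (fixed x + y). -/
inductive Line : Type where
  | row : ℤ → Line
  | col : ℤ → Line
  | posDiag : ℤ → Line
  | negDiag : ℤ → Line
deriving DecidableEq

/-- The defining condition for a point to be on a given line. -/
def Line.pred : Line → ℤ × ℤ → Prop
  | .row b, p => p.2 = b
  | .col a, p => p.1 = a
  | .posDiag d, p => p.1 - p.2 = d
  | .negDiag s, p => p.1 + p.2 = s

instance (L : Line) (p : ℤ × ℤ) : Decidable (L.pred p) :=
  match L with
  | .row b => inferInstanceAs (Decidable (p.2 = b))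
  | .col a => inferInstanceAs (Decidable (p.1 = a))
  | .posDiag d => inferInstanceAs (Decidable (p.1 - p.2 = d))
  | .negDiag s => inferInstanceAs (Decidable (p.1 + p.2 = s))

/-- The set of squares of the n×n board lying on a line. -/
noncomputable def Line.squares (n : ℕ) (L : Line) : Finset (ℤ × ℤ) := (board n).filter L.pred

/-- The length of a line: its number of board squares. -/
noncomputable def Line.length (n : ℕ) (L : Line) : ℕ := (L.squares n).card

/-- Whether a line is a diagonal (of either orientation). -/
def Line.isDiag : Line → Prop
  | .posDiag _ => True
  | .negDiag _ => True
  | _ => False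

/-- The set of board squares attacked by a placement S of queens: squares q on
the board such that some queen p ∈ S with p ≠ q shares a row, column, or
diagonal with q. -/
noncomputable def attacked (n : ℕ) (S : Finset (ℤ × ℤ)) : Finset (ℤ × ℤ) :=
  S.biUnion fun p => (board n).filter fun q =>
    q ≠ p ∧ (p.1 = q.1 ∨ p.2 = q.2 ∨ p.1 - p.2 = q.1 - q.2 ∨ p.1 + p.2 = q.1 + q.2)

/-- G(m) = ⌊m²/12⌋ + 1 if m ≡ 3, 6, 9 (mod 12) or m = 10; ⌊m²/12⌋ otherwise. -/
def G (m : ℕ) : ℕ :=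
  if m % 12 = 3 ∨ m % 12 = 6 ∨ m % 12 = 9 ∨ m = 10 then m ^ 2 / 12 + 1 else m ^ 2 / 12

/-- The set of diagonals (of either orientation) containing at least one
square of T. -/
def diagsThrough (T : Finset (ℤ × ℤ)) : Finset Line :=
  T.image (fun p => Line.posDiag (p.1 - p.2)) ∪
    T.image (fun p => Line.negDiag (p.1 + p.2))

lemma len_posDiag_ge (n : ℕ) (x y : ℤ) (hx : 1 ≤ x) (hx' : x ≤ (n:ℤ))
    (hy : 1 ≤ y) (hy' : y ≤ (n:ℤ)) :
    (n : ℤ) - |x - y| ≤ ((Line.posDiag (x - y)).length n : ℤ) := by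
  have hsub : Finset.image (fun t => (x + t, y + t))
      (Finset.Icc (1 - min x y) ((n:ℤ) - max x y)) ⊆ (Line.posDiag (x - y)).squares n := by
    intro p hp
    simp only [Finset.mem_image, Finset.mem_Icc] at hp
    obtain ⟨t, ⟨h1, h2⟩, rfl⟩ := hp
    simp only [Line.squares, board, Line.pred, Finset.mem_filter, Finset.mem_product,
      Finset.mem_Icc]
    constructor
    · constructor <;> constructor <;> omega
    · ring
  have hcard := Finset.card_le_card hsub
  rw [Finset.card_image_of_injective _ (fun a b hab => by
    have := congrArg Prod.fst hab; simp at this; omega)] at hcard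
  rw [Int.card_Icc] at hcard
  have : ((n:ℤ) - max x y + 1 - (1 - min x y)).toNat ≤ ((Line.posDiag (x - y)).length n : ℕ) :=
    hcard
  rcases abs_cases (x - y) with ⟨h, _⟩ | ⟨h, _⟩ <;> omega

lemma len_negDiag_ge (n : ℕ) (x y : ℤ) (hx : 1 ≤ x) (hx' : x ≤ (n:ℤ))
    (hy : 1 ≤ y) (hy' : y ≤ (n:ℤ)) :
    (n : ℤ) - |x + y - n - 1| ≤ ((Line.negDiag (x + y)).length n : ℤ) := by
  have hsub : Finset.image (fun t => (x + t, y - t))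
      (Finset.Icc (max (1 - x) (y - n)) (min ((n:ℤ) - x) (y - 1))) ⊆
      (Line.negDiag (x + y)).squares n := by
    intro p hp
    simp only [Finset.mem_image, Finset.mem_Icc] at hp
    obtain ⟨t, ⟨h1, h2⟩, rfl⟩ := hp
    simp only [Line.squares, board, Line.pred, Finset.mem_filter, Finset.mem_product,
      Finset.mem_Icc]
    constructor
    · constructor <;> constructor <;> omega
    · ring
  have hcard := Finset.card_le_card hsub
  rw [Finset.card_image_of_injective _ (fun a b hab => by
    have := congrArg Prod.fst hab; simp at this; omega)] at hcard
  rw [Int.card_Icc] at hcard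
  have : (min ((n:ℤ) - x) (y - 1) + 1 - max (1 - x) (y - n)).toNat ≤
      ((Line.negDiag (x + y)).length n : ℕ) := hcard
  rcases abs_cases (x + y - n - 1) with ⟨h, _⟩ | ⟨h, _⟩ <;> omega

lemma mem_diagsThrough_iff (T : Finset (ℤ × ℤ)) (L : Line) :
    L ∈ diagsThrough T ↔ ∃ p ∈ T, L = Line.posDiag (p.1 - p.2) ∨
      L = Line.negDiag (p.1 + p.2) := by
  simp only [diagsThrough, Finset.mem_union, Finset.mem_image]
  constructor
  · rintro (⟨q, hq, rfl⟩ | ⟨q, hq, rfl⟩)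
    · exact ⟨q, hq, Or.inl rfl⟩
    · exact ⟨q, hq, Or.inr rfl⟩
  · rintro ⟨q, hq, rfl | rfl⟩
    · exact Or.inl ⟨q, hq, rfl⟩
    · exact Or.inr ⟨q, hq, rfl⟩

lemma filter_diags_eq (T : Finset (ℤ × ℤ)) (p : ℤ × ℤ) (hp : p ∈ T) :
    (diagsThrough T).filter (fun L => L.pred p) =
      {Line.posDiag (p.1 - p.2), Line.negDiag (p.1 + p.2)} := by
  ext L
  simp only [Finset.mem_filter, Finset.mem_insert, Finset.mem_singleton,
    mem_diagsThrough_iff]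
  constructor
  · rintro ⟨⟨q, hq, rfl | rfl⟩, hpred⟩
    · simp only [Line.pred] at hpred
      left; rw [hpred]
    · simp only [Line.pred] at hpred
      right; rw [hpred]
  · rintro (rfl | rfl)
    · exact ⟨⟨p, hp, Or.inl rfl⟩, rfl⟩
    · exact ⟨⟨p, hp, Or.inr rfl⟩, rfl⟩

/-- If T consists of 2C board squares, each at distance at least
D from every side of the board, and every diagonal contains at most 2 squares
of T, then the sum of the lengths of the diagonals through squares of T is at
least C·n + 2·C·D plus half the sum of the lengths of the diagonals containing
exactly one square of T. -/
theorem critical_ring_diagonal_length_bound (n C D : ℕ) (hn : 0 < n) (hC : 0 < C)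
    (T : Finset (ℤ × ℤ)) (hT : T ⊆ board n) (hTcard : T.card = 2 * C)
    (hdist : ∀ p ∈ T, (D : ℤ) ≤ min (p.1 - 1) (min (p.2 - 1)
      (min ((n : ℤ) - p.1) ((n : ℤ) - p.2))))
    (htwo : ∀ L : Line, L.isDiag → (T.filter L.pred).card ≤ 2) :
    (C : ℚ) * n + 2 * C * D +
        (∑ L ∈ (diagsThrough T).filter (fun L => (T.filter L.pred).card = 1),
          (L.length n : ℚ)) / 2
      ≤ ∑ L ∈ diagsThrough T, (L.length n : ℚ) := by
  classical
  -- pointwise bound: the two diagonals through p have total length ≥ n + 2D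
  have hpt : ∀ p ∈ T, (n : ℚ) + 2 * D ≤
      ((Line.posDiag (p.1 - p.2)).length n : ℚ) +
        ((Line.negDiag (p.1 + p.2)).length n : ℚ) := by
    intro p hp
    have hb := hT hp
    simp only [board, Finset.mem_product, Finset.mem_Icc] at hb
    have h1 := len_posDiag_ge n p.1 p.2 hb.1.1 hb.1.2 hb.2.1 hb.2.2
    have h2 := len_negDiag_ge n p.1 p.2 hb.1.1 hb.1.2 hb.2.1 hb.2.2
    have hd := hdist p hp
    have key : (n : ℤ) + 2 * D ≤ ((Line.posDiag (p.1 - p.2)).length n : ℤ) +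
        ((Line.negDiag (p.1 + p.2)).length n : ℤ) := by
      simp only [le_min_iff] at hd
      rcases abs_cases (p.1 - p.2) with ⟨ha, _⟩ | ⟨ha, _⟩ <;>
        rcases abs_cases (p.1 + p.2 - (n : ℤ) - 1) with ⟨hb', _⟩ | ⟨hb', _⟩ <;> omega
    exact_mod_cast key
  -- double counting
  have hsum : ∑ p ∈ T, (((Line.posDiag (p.1 - p.2)).length n : ℚ) +
        ((Line.negDiag (p.1 + p.2)).length n : ℚ))
      = ∑ L ∈ diagsThrough T, ((T.filter L.pred).card : ℚ) * (L.length n : ℚ) := by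
    have hstep : ∀ p ∈ T, ((Line.posDiag (p.1 - p.2)).length n : ℚ) +
        ((Line.negDiag (p.1 + p.2)).length n : ℚ)
        = ∑ L ∈ (diagsThrough T).filter (fun L => L.pred p), (L.length n : ℚ) := by
      intro p hp
      rw [filter_diags_eq T p hp, Finset.sum_pair (by simp)]
    rw [Finset.sum_congr rfl hstep]
    simp only [Finset.sum_filter]
    rw [Finset.sum_comm]
    refine Finset.sum_congr rfl fun L hL => ?_
    rw [← Finset.sum_filter, Finset.sum_const, nsmul_eq_mul]
  -- each diagonal through T contains 1 or 2 points of T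
  have hc : ∀ L ∈ diagsThrough T,
      (T.filter L.pred).card = 1 ∨ (T.filter L.pred).card = 2 := by
    intro L hL
    rw [mem_diagsThrough_iff] at hL
    obtain ⟨q, hq, hLq⟩ := hL
    have hisd : L.isDiag := by rcases hLq with rfl | rfl <;> trivial
    have h2 := htwo L hisd
    have h1 : 0 < (T.filter L.pred).card := Finset.card_pos.mpr
      ⟨q, Finset.mem_filter.mpr ⟨hq, by rcases hLq with rfl | rfl <;> simp [Line.pred]⟩⟩
    omega
  -- rewrite the weighted sum
  have key2 : ∑ L ∈ diagsThrough T, ((T.filter L.pred).card : ℚ) * (L.length n : ℚ)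
      = 2 * (∑ L ∈ diagsThrough T, (L.length n : ℚ)) -
        ∑ L ∈ (diagsThrough T).filter (fun L => (T.filter L.pred).card = 1),
          (L.length n : ℚ) := by
    rw [Finset.sum_filter, Finset.mul_sum, ← Finset.sum_sub_distrib]
    refine Finset.sum_congr rfl fun L hL => ?_
    rcases hc L hL with h | h <;> rw [h] <;> norm_num <;> ring
  -- the lower bound on the weighted sum
  have hlow : (2 * C : ℚ) * ((n : ℚ) + 2 * D) ≤
      ∑ L ∈ diagsThrough T, ((T.filter L.pred).card : ℚ) * (L.length n : ℚ) := by
    calc (2 * C : ℚ) * ((n : ℚ) + 2 * D)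
        = ∑ _p ∈ T, ((n : ℚ) + 2 * D) := by
          rw [Finset.sum_const, hTcard]; push_cast; ring
      _ ≤ _ := Finset.sum_le_sum hpt
      _ = _ := hsum
  linarith [hlow, key2]
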